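/- Let C be a d-uniform clutter with a perfect matching such that its set covering polyhedron Q(A) is integral. Then C is vertex critical, i.e., α₀(C \ {x_i}) < α₀(C) for every vertex x_i. -/

import Mathlib

open Finset

/-- A clutter on vertex set `Fin n`: a family of nonempty edges, none contained in another. -/
structure Clutter (n : ℕ) where
  edges : Finset (Finset (Fin n))
  nonempty_edges : ∀ e ∈ edges, e.Nonempty
  antichain : ∀ e ∈ edges, ∀ f ∈ edges, e ⊆ f → e = f

namespace Clutter

variable {n : ℕ}

/-- `C` is `d`-uniform: every edge has exactly `d` vertices. -/
def Uniform (C : Clutter n) (d : ℕ) : Prop := ∀ e ∈ C.edges, e.card = d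

/-- `S` is a vertex cover of `C`. -/
def IsCover (C : Clutter n) (S : Finset (Fin n)) : Prop := ∀ e ∈ C.edges, (e ∩ S).Nonempty

/-- `S` is a minimal vertex cover of `C`. -/
def IsMinCover (C : Clutter n) (S : Finset (Fin n)) : Prop :=
  C.IsCover S ∧ ∀ T ⊆ S, C.IsCover T → T = S

/-- The vertex covering number `α₀(C)`. -/
noncomputable def coverNumber (C : Clutter n) : ℕ :=
  sInf {k | ∃ S : Finset (Fin n), C.IsCover S ∧ S.card = k}

/-- The edge independence (matching) number `β₁(C)`. -/
noncomputable def matchNumber (C : Clutter n) : ℕ :=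
  sSup {k | ∃ M : Finset (Finset (Fin n)), M ⊆ C.edges ∧
    (∀ e ∈ M, ∀ f ∈ M, e ≠ f → Disjoint e f) ∧ M.card = k}

/-- `C` has a perfect matching: pairwise disjoint edges covering all vertices. -/
def HasPerfectMatching (C : Clutter n) : Prop :=
  ∃ M : Finset (Finset (Fin n)), M ⊆ C.edges ∧
    (∀ e ∈ M, ∀ f ∈ M, e ≠ f → Disjoint e f) ∧ (∀ i : Fin n, ∃ e ∈ M, i ∈ e)

/-- The set covering polyhedron `Q(A) = {x : x ≥ 0, xA ≥ 1}`. -/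
def QA (C : Clutter n) : Set (Fin n → ℝ) :=
  {x | (∀ i, 0 ≤ x i) ∧ ∀ e ∈ C.edges, 1 ≤ ∑ i ∈ e, x i}

/-- `Q(A)` is an integral polyhedron: all its vertices (extreme points) are integral. -/
def QAIntegral (C : Clutter n) : Prop :=
  ∀ x ∈ Set.extremePoints ℝ C.QA, ∀ i, ∃ z : ℤ, x i = (z : ℝ)

/-- Deletion of a vertex: remove `v` and all edges through it. -/
def delete (C : Clutter n) (v : Fin n) : Clutter n where
  edges := C.edges.filter (fun e => v ∉ e)
  nonempty_edges := fun e he => C.nonempty_edges e (mem_filter.mp he).1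
  antichain := fun e he f hf hef =>
    C.antichain e (mem_filter.mp he).1 f (mem_filter.mp hf).1 hef

/-- The edges of the minor of `C` obtained by deleting the vertices in `D`
(setting them to `0`) and contracting the vertices in `U` (setting them to `1`):
the minimal nonempty sets of the form `e \ U` with `e` an edge disjoint from `D`. -/
def minorEdges (C : Clutter n) (D U : Finset (Fin n)) : Finset (Finset (Fin n)) :=
  ((C.edges.filter (fun e => Disjoint e D)).image (fun e => e \ U)).filter
    (fun e => e.Nonempty ∧
      ∀ f ∈ (C.edges.filter (fun e => Disjoint e D)).image (fun e => e \ U),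
        f.Nonempty → f ⊆ e → f = e)

/-- The minor of `C` determined by deleting `D` and contracting `U`. -/
def minor (C : Clutter n) (D U : Finset (Fin n)) : Clutter n where
  edges := C.minorEdges D U
  nonempty_edges := fun e he => ((mem_filter.mp he).2).1
  antichain := fun e he f hf hef =>
    ((mem_filter.mp hf).2).2 e (mem_filter.mp he).1 ((mem_filter.mp he).2).1 hef

/-- The König property: `α₀(C) = β₁(C)`. -/
def HasKonig (C : Clutter n) : Prop := C.coverNumber = C.matchNumber

/-- The packing property: every (proper) minor of `C` has the König property. -/
def PackingProperty (C : Clutter n) : Prop :=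
  ∀ D U : Finset (Fin n), Disjoint D U →
    (∀ e ∈ C.edges, Disjoint e D → ¬ e ⊆ U) → (C.minor D U).HasKonig

/-- The max-flow min-cut property: for every nonnegative integral `α` the LP
`min{⟨α,x⟩ : x ≥ 0, xA ≥ 1}` and its dual `max{⟨y,1⟩ : y ≥ 0, Ay ≤ α}` both have
integral optimum solutions (expressed via a pair of integral feasible solutions
with equal objective values, which are then optimal by LP duality). -/
def HasMFMC (C : Clutter n) : Prop :=
  ∀ α : Fin n → ℕ,
    ∃ (x : Fin n → ℕ) (y : Finset (Fin n) → ℕ),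
      (∀ e ∈ C.edges, 1 ≤ ∑ i ∈ e, x i) ∧
      (∀ e, e ∉ C.edges → y e = 0) ∧
      (∀ i : Fin n, ∑ e ∈ C.edges.filter (fun e => i ∈ e), y e ≤ α i) ∧
      (∑ i, α i * x i = ∑ e ∈ C.edges, y e)

/-- The incidence matrix of `C`, with columns indexed by the edges. -/
def inc (C : Clutter n) : Matrix (Fin n) {e // e ∈ C.edges} ℤ :=
  Matrix.of fun i e => if i ∈ e.1 then 1 else 0

end Clutter

/-- `Δ_r(A) = 1`: the gcd of all nonzero `r × r` subdeterminants of `A` is `1`,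
i.e. every common divisor of them is a unit. -/
def DeltaOne {m m' : Type*} [Fintype m] [Fintype m'] (A : Matrix m m' ℤ) (r : ℕ) : Prop :=
  ∀ k : ℤ, (∀ (f : Fin r → m) (g : Fin r → m'), Function.Injective f → Function.Injective g →
    (A.submatrix f g).det ≠ 0 → k ∣ (A.submatrix f g).det) → IsUnit k


set_option maxHeartbeats 1000000 in
/-- If `C` is a `d`-uniform clutter with a perfect matching whose set
covering polyhedron `Q(A)` is integral, then `C` is vertex critical:
`α₀(C \ {x_i}) < α₀(C)` for every vertex `x_i`. -/
theorem stmt3 {n d : ℕ} (C : Clutter n) (hC : C.Uniform d)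
    (hpm : C.HasPerfectMatching) (hQ : C.QAIntegral) :
    ∀ i : Fin n, (C.delete i).coverNumber < C.coverNumber := by
  classical
  intro i
  obtain ⟨M, hMsub, hMdisj, hMcov⟩ := hpm
  set m := M.card with hm
  -- the matching partitions the vertex set, so n = m * d
  have hbU : M.biUnion id = Finset.univ := by
    apply Finset.eq_univ_iff_forall.mpr
    intro j
    obtain ⟨e, he, hje⟩ := hMcov j
    exact Finset.mem_biUnion.mpr ⟨e, he, hje⟩
  have hn : n = m * d := by
    have h1 : (M.biUnion id).card = ∑ e ∈ M, e.card :=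
      Finset.card_biUnion (fun e he f hf hef => hMdisj e he f hf hef)
    rw [hbU, Finset.card_univ, Fintype.card_fin] at h1
    rw [h1]
    rw [Finset.sum_congr rfl (fun e he => hC e (hMsub he)), Finset.sum_const, smul_eq_mul]
  have hm1 : 1 ≤ m := by
    obtain ⟨e, he, _⟩ := hMcov i
    exact Finset.card_pos.mpr ⟨e, he⟩
  have hd1 : 1 ≤ d := by
    by_contra h
    push_neg at h
    interval_cases d
    · rw [mul_zero] at hn
      exact absurd i.2 (by omega)
  have hdR : (0:ℝ) < d := by exact_mod_cast hd1
  -- lower bound: every cover has at least m elements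
  have hlow : ∀ S : Finset (Fin n), C.IsCover S → m ≤ S.card := by
    intro S hS
    have hne : ∀ e ∈ M, (e ∩ S).Nonempty := fun e he => hS e (hMsub he)
    set f : Finset (Fin n) → Fin n :=
      fun e => if h : (e ∩ S).Nonempty then h.choose else i with hf
    have hf1 : ∀ e ∈ M, f e ∈ e ∩ S := by
      intro e he
      simp only [hf, dif_pos (hne e he)]
      exact (hne e he).choose_spec
    apply Finset.card_le_card_of_injOn f
    · intro e he
      exact (Finset.mem_inter.mp (hf1 e he)).2
    · intro e he e' he' hfe
      by_contra hne'
      have h1 := Finset.mem_inter.mp (hf1 e he)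
      have h2 := Finset.mem_inter.mp (hf1 e' he')
      exact Finset.disjoint_left.mp (hMdisj e he e' he' hne') h1.1 (hfe ▸ h2.1)
  -- the cover number set is nonempty
  have hunivcov : C.IsCover Finset.univ := by
    intro e he
    rw [Finset.inter_univ]
    exact C.nonempty_edges e he
  have hcovne : {k | ∃ S : Finset (Fin n), C.IsCover S ∧ S.card = k}.Nonempty :=
    ⟨Finset.univ.card, Finset.univ, hunivcov, rfl⟩
  have hαm : m ≤ C.coverNumber := by
    obtain ⟨S₀, hS₀, hS₀card⟩ := Nat.sInf_mem hcovne
    rw [Clutter.coverNumber, ← hS₀card]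
    exact hlow S₀ hS₀
  -- set up the perturbed objective
  set mR : ℝ := (m : ℝ) with hmR
  have hmR0 : (0:ℝ) ≤ mR := Nat.cast_nonneg m
  set ε : ℝ := 1 / (2 * (mR + 1)) with hε
  have hε0 : 0 < ε := by positivity
  have hεhalf : ε ≤ 1/2 := by
    rw [hε]
    rw [div_le_div_iff₀ (by positivity) (by norm_num)]
    nlinarith
  have hεm : (mR + 1) * ε = 1/2 := by
    rw [hε]
    field_simp
  set c : Fin n → ℝ := fun j => if j = i then 1 - ε else 1 with hc
  have hc_ge : ∀ j, (1:ℝ)/2 ≤ c j := by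
    intro j
    rw [hc]
    by_cases h : j = i <;> simp [h] <;> linarith
  set L : (Fin n → ℝ) → ℝ := fun x => ∑ j, c j * x j with hL
  have hLcont : Continuous L := by
    apply continuous_finset_sum
    exact fun j _ => continuous_const.mul (continuous_apply j)
  -- the point x0 = (1/d, ..., 1/d)
  set x0 : Fin n → ℝ := fun _ => (d : ℝ)⁻¹ with hx0
  have hx0Q : x0 ∈ C.QA := by
    constructor
    · intro j
      positivity
    · intro e he
      rw [hx0]
      rw [Finset.sum_const, hC e he, nsmul_eq_mul]
      rw [mul_inv_cancel₀ (ne_of_gt hdR)]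
  have hsumc : ∑ j, c j = (n : ℝ) - ε := by
    have h1 : ∀ j : Fin n, c j = 1 - (if j = i then ε else 0) := by
      intro j
      rw [hc]
      by_cases h : j = i <;> simp [h]
    rw [Finset.sum_congr rfl (fun j _ => h1 j), Finset.sum_sub_distrib,
      Finset.sum_const, Finset.sum_ite_eq' Finset.univ i (fun _ => ε),
      if_pos (Finset.mem_univ i), Finset.card_univ, Fintype.card_fin, nsmul_eq_mul, mul_one]
  have hLx0 : L x0 = mR - ε / d := by
    rw [hL, hx0]
    simp only
    rw [← Finset.sum_mul, hsumc]
    have hncast : (n : ℝ) = mR * d := by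
      rw [hmR, hn]
      push_cast
      ring
    rw [hncast]
    field_simp
  -- Q(A) is closed
  have hQclosed : IsClosed C.QA := by
    have heq : C.QA = (⋂ j, {x : Fin n → ℝ | 0 ≤ x j}) ∩
        ⋂ e ∈ C.edges, {x : Fin n → ℝ | 1 ≤ ∑ j ∈ e, x j} := by
      ext x
      simp [Clutter.QA, Set.mem_iInter]
    rw [heq]
    refine IsClosed.inter (isClosed_iInter fun j => isClosed_le continuous_const
      (continuous_apply j)) (isClosed_iInter fun e => isClosed_iInter fun _ =>
      isClosed_le continuous_const (continuous_finset_sum _ fun j _ => continuous_apply j))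
  -- the truncated polyhedron K0 is compact
  set K0 : Set (Fin n → ℝ) := C.QA ∩ {x | L x ≤ mR} with hK0
  have hx0K0 : x0 ∈ K0 := by
    refine ⟨hx0Q, ?_⟩
    rw [Set.mem_setOf_eq, hLx0]
    have : 0 ≤ ε / d := (div_pos hε0 hdR).le
    linarith
  have hK0closed : IsClosed K0 := hQclosed.inter (isClosed_le hLcont continuous_const)
  have hK0sub : K0 ⊆ Set.pi Set.univ (fun _ : Fin n => Set.Icc (0:ℝ) (2 * mR)) := by
    intro x hx
    intro j _
    have hx0j : 0 ≤ x j := hx.1.1 j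
    have hterm : ∀ k : Fin n, k ∈ Finset.univ → 0 ≤ c k * x k := by
      intro k _
      exact mul_nonneg (le_trans (by norm_num) (hc_ge k)) (hx.1.1 k)
    have hsingle : c j * x j ≤ L x := Finset.single_le_sum hterm (Finset.mem_univ j)
    have hLx : L x ≤ mR := hx.2
    have h2 : (1/2) * x j ≤ c j * x j := mul_le_mul_of_nonneg_right (hc_ge j) hx0j
    constructor
    · exact hx0j
    · linarith
  have hK0cpt : IsCompact K0 :=
    IsCompact.of_isClosed_subset (isCompact_univ_pi fun _ => isCompact_Icc) hK0closed hK0sub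
  -- minimize L over K0
  obtain ⟨xbar, hxbarK0, hxbarmin⟩ := hK0cpt.exists_isMinOn ⟨x0, hx0K0⟩ hLcont.continuousOn
  set μ : ℝ := L xbar with hμ
  have hμx0 : μ ≤ mR - ε / d := by
    rw [hμ, ← hLx0]
    exact hxbarmin hx0K0
  have hμm : μ ≤ mR := by
    have : 0 ≤ ε / d := (div_pos hε0 hdR).le
    linarith
  have hglobal : ∀ x ∈ C.QA, μ ≤ L x := by
    intro x hx
    by_cases h : L x ≤ mR
    · exact hxbarmin ⟨hx, h⟩
    · push_neg at h
      linarith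
  -- the optimal face K is compact nonempty
  set K : Set (Fin n → ℝ) := C.QA ∩ {x | L x = μ} with hK
  have hKsub : K ⊆ K0 := by
    intro x hx
    exact ⟨hx.1, by rw [Set.mem_setOf_eq, hx.2]; exact hμm⟩
  have hKclosed : IsClosed K := hQclosed.inter (isClosed_eq hLcont continuous_const)
  have hKcpt : IsCompact K := IsCompact.of_isClosed_subset hK0cpt hKclosed hKsub
  have hKne : K.Nonempty := ⟨xbar, hxbarK0.1, rfl⟩
  obtain ⟨xs, hxs⟩ := hKcpt.extremePoints_nonempty hKne
  obtain ⟨⟨hxsQ, hxsL⟩, hxsext⟩ := hxs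
  rw [Set.mem_setOf_eq] at hxsL
  -- xs is an extreme point of Q(A)
  have hxsQext : xs ∈ Set.extremePoints ℝ C.QA := by
    refine ⟨hxsQ, ?_⟩
    intro x1 hx1 x2 hx2 hseg
    obtain ⟨a, b, ha, hb, hab, hsum⟩ := hseg
    have h1 : μ ≤ L x1 := hglobal _ hx1
    have h2 : μ ≤ L x2 := hglobal _ hx2
    have hLaff : L (a • x1 + b • x2) = a * L x1 + b * L x2 := by
      simp only [hL, Pi.add_apply, Pi.smul_apply, smul_eq_mul, mul_add,
        Finset.sum_add_distrib, Finset.mul_sum]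
      congr 1 <;> exact Finset.sum_congr rfl fun j _ => by ring
    have hsum' : a * L x1 + b * L x2 = μ := by
      rw [← hLaff, hsum, hxsL]
    have e1 : a * μ ≤ a * L x1 := mul_le_mul_of_nonneg_left h1 ha.le
    have e2 : b * μ ≤ b * L x2 := mul_le_mul_of_nonneg_left h2 hb.le
    have habμ : a * μ + b * μ = μ := by rw [← add_mul, hab, one_mul]
    have hL1 : L x1 = μ := by
      by_contra hne
      have hlt : μ < L x1 := lt_of_le_of_ne h1 (Ne.symm hne)
      have : a * μ < a * L x1 := mul_lt_mul_of_pos_left hlt ha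
      linarith
    have hL2 : L x2 = μ := by
      by_contra hne
      have hlt : μ < L x2 := lt_of_le_of_ne h2 (Ne.symm hne)
      have : b * μ < b * L x2 := mul_lt_mul_of_pos_left hlt hb
      linarith
    exact hxsext ⟨hx1, hL1⟩ ⟨hx2, hL2⟩ ⟨a, b, ha, hb, hab, hsum⟩
  -- xs is integral, extract natural number values
  have hint := hQ xs hxsQext
  have hsnat : ∀ j, ∃ k : ℕ, (k : ℝ) = xs j := by
    intro j
    obtain ⟨z, hz⟩ := hint j
    have hz0 : 0 ≤ z := by
      have := hxsQ.1 j
      rw [hz] at this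
      exact_mod_cast this
    refine ⟨z.toNat, ?_⟩
    rw [hz]
    exact_mod_cast congrArg (fun w : ℤ => (w : ℝ)) (Int.toNat_of_nonneg hz0)
  choose s hs using hsnat
  -- the support of xs is a cover
  set S : Finset (Fin n) := Finset.univ.filter (fun j => 1 ≤ s j) with hS
  have hScover : C.IsCover S := by
    intro e he
    have h1 : (1:ℝ) ≤ ∑ j ∈ e, (s j : ℝ) := by
      rw [Finset.sum_congr rfl (fun j _ => hs j)]
      exact hxsQ.2 e he
    have h2 : 1 ≤ ∑ j ∈ e, s j := by exact_mod_cast (by push_cast; exact h1 : (1:ℝ) ≤ ((∑ j ∈ e, s j : ℕ) : ℝ))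
    have h3 : ∑ j ∈ e, s j ≠ 0 := by omega
    obtain ⟨j, hje, hj0⟩ := Finset.exists_ne_zero_of_sum_ne_zero h3
    exact ⟨j, Finset.mem_inter.mpr ⟨hje, Finset.mem_filter.mpr ⟨Finset.mem_univ j, by omega⟩⟩⟩
  have hcov_le : C.coverNumber ≤ S.card := Nat.sInf_le ⟨S, hScover, rfl⟩
  set t : ℕ := ∑ j, s j with ht
  have hScard_le : S.card ≤ t := by
    calc S.card = ∑ j ∈ S, 1 := by rw [Finset.card_eq_sum_ones]
    _ ≤ ∑ j ∈ S, s j := Finset.sum_le_sum (fun j hj => (Finset.mem_filter.mp hj).2)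
    _ ≤ t := Finset.sum_le_sum_of_subset (Finset.subset_univ S)
  have htm : m ≤ t := le_trans hαm (le_trans hcov_le hScard_le)
  -- evaluate L at xs
  have hLxs : (t : ℝ) - ε * (s i : ℝ) = μ := by
    rw [← hxsL, hL]
    have h1 : ∀ j : Fin n, c j * xs j = (s j : ℝ) - (if j = i then ε * (s j : ℝ) else 0) := by
      intro j
      rw [← hs j, hc]
      by_cases h : j = i <;> simp [h] <;> ring
    simp only
    rw [Finset.sum_congr rfl (fun j _ => h1 j), Finset.sum_sub_distrib,
      Finset.sum_ite_eq' Finset.univ i, if_pos (Finset.mem_univ i)]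
    rw [ht]
    push_cast
    ring
  have hkey : (t : ℝ) - ε * (s i : ℝ) ≤ mR - ε / d := by
    rw [hLxs]; exact hμx0
  -- s i ≥ 1
  have hsi : 1 ≤ s i := by
    by_contra h
    push_neg at h
    have hsi0 : s i = 0 := by omega
    rw [hsi0] at hkey
    have htR : mR ≤ (t : ℝ) := by
      rw [hmR]
      exact_mod_cast htm
    have hεd : 0 < ε / d := div_pos hε0 hdR
    simp only [Nat.cast_zero, mul_zero, sub_zero] at hkey
    linarith
  have hiS : i ∈ S := Finset.mem_filter.mpr ⟨Finset.mem_univ i, hsi⟩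
  -- t ≤ m
  have hsit : s i ≤ t := Finset.single_le_sum (fun j _ => Nat.zero_le (s j)) (Finset.mem_univ i)
  have ht_le : t ≤ m := by
    by_contra h
    push_neg at h
    have htR : mR + 1 ≤ (t : ℝ) := by
      rw [hmR]
      exact_mod_cast h
    have hsitR : (s i : ℝ) ≤ (t : ℝ) := by exact_mod_cast hsit
    have h1 : (t : ℝ) * (1 - ε) ≤ mR - ε / d := by
      have : ε * (s i : ℝ) ≤ ε * (t : ℝ) := mul_le_mul_of_nonneg_left hsitR hε0.le
      nlinarith
    have h2 : (mR + 1) * (1 - ε) ≤ (t : ℝ) * (1 - ε) := by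
      apply mul_le_mul_of_nonneg_right htR
      linarith
    have h3 : (mR + 1) * (1 - ε) = mR + 1/2 := by
      rw [mul_sub, hεm]
      ring
    have : 0 ≤ ε / d := (div_pos hε0 hdR).le
    linarith
  -- conclude: coverNumber C = m, S has card m, i ∈ S
  have hcov_eq : C.coverNumber = m := le_antisymm (by omega) hαm
  have hScard : S.card = m := by omega
  -- S minus i covers the deletion
  set T : Finset (Fin n) := S.erase i with hT
  have hTcover : (C.delete i).IsCover T := by
    intro e he
    rw [Clutter.delete] at he
    simp only [Finset.mem_filter] at he
    obtain ⟨he1, he2⟩ := he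
    obtain ⟨j, hj⟩ := hScover e he1
    rw [Finset.mem_inter] at hj
    refine ⟨j, Finset.mem_inter.mpr ⟨hj.1, Finset.mem_erase.mpr ⟨?_, hj.2⟩⟩⟩
    intro hji
    exact he2 (hji ▸ hj.1)
  have hdel_le : (C.delete i).coverNumber ≤ T.card := Nat.sInf_le ⟨T, hTcover, rfl⟩
  have hTcard : T.card = m - 1 := by
    rw [hT, Finset.card_erase_of_mem hiS, hScard]
  omega
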